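/- Let F' ≤ F be a finite index subgroup with Φᵏ(F') = F' and set Ψ = Φᵏ|_{F'}. If Ψ is polynomially growing on F' then Φᵏ is polynomially growing on F: for every x ∈ F there is m ≥ 1 with xᵐ ∈ F', and the polynomial growth of the F'-conjugacy class of xᵐ under Ψ implies polynomial growth of the F-conjugacy class of x under Φᵏ, of the same degree. -/

import Mathlib

set_option linter.unusedSectionVars false
set_option maxHeartbeats 1000000

namespace Stmt11Aux

open FreeGroup

variable {α : Type*} [DecidableEq α]

def RR (p q : α × Bool) : Prop := ¬(p.1 = q.1 ∧ p.2 = !q.2)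

lemma RR_iff (p q : α × Bool) : RR p q ↔ q ≠ (p.1, !p.2) := by
  rcases p with ⟨x, b⟩; rcases q with ⟨y, c⟩
  simp only [RR, Prod.mk.injEq, ne_eq, Prod.ext_iff]
  cases b <;> cases c <;> simp [eq_comm]

lemma RR_comm (p q : α × Bool) : RR p q ↔ RR q p := by
  rcases p with ⟨x, b⟩; rcases q with ⟨y, c⟩
  simp only [RR]
  cases b <;> cases c <;> simp [eq_comm]

lemma RR_self (p : α × Bool) : RR p p := by
  rcases p with ⟨x, b⟩; simp [RR]

lemma RR_inv_right (b p : α × Bool) : RR b (p.1, !p.2) ↔ b ≠ p := by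
  rcases p with ⟨x, c⟩; rcases b with ⟨y, d⟩
  simp only [RR, Prod.mk.injEq, ne_eq, Prod.ext_iff]
  cases c <;> cases d <;> simp [eq_comm]

lemma RR_inv_inv (q p : α × Bool) : RR (q.1, !q.2) (p.1, !p.2) ↔ p ≠ (q.1, !q.2) := by
  rcases p with ⟨x, c⟩; rcases q with ⟨y, d⟩
  simp only [RR, Prod.mk.injEq, ne_eq, Prod.ext_iff]
  cases c <;> cases d <;> simp [eq_comm]

def Red' (L : List (α × Bool)) : Prop := L.Chain' RR

lemma reduce_eq_self {L : List (α × Bool)} (h : Red' L) : reduce L = L := by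
  induction L with
  | nil => rfl
  | cons x L ih =>
    rw [Red', List.Chain', List.isChain_cons] at h
    rw [reduce.cons, ih h.2]
    cases L with
    | nil => rfl
    | cons y t =>
      have := h.1 y rfl
      rw [RR] at this
      simp only [if_neg this]

lemma red'_reduce (L : List (α × Bool)) : Red' (reduce L) := by
  induction L with
  | nil => exact List.isChain_nil
  | cons x L ih =>
    rw [reduce.cons]
    cases h : reduce L with
    | nil => exact List.isChain_singleton x
    | cons hd tl =>
      rw [h] at ih
      dsimp only
      split_ifs with hc
      · exact ih.tail
      · exact List.isChain_cons_cons.2 ⟨hc, ih⟩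

lemma red'_iff {L : List (α × Bool)} : Red' L ↔ reduce L = L :=
  ⟨reduce_eq_self, fun h => h ▸ red'_reduce L⟩

lemma red'_toWord (x : FreeGroup α) : Red' x.toWord := by
  rw [red'_iff]; exact reduce_toWord x

lemma toWord_mk_eq {L : List (α × Bool)} (h : Red' L) : (mk L).toWord = L := by
  rw [toWord_mk, reduce_eq_self h]

lemma norm_eq_len (x : FreeGroup α) : norm x = x.toWord.length := rfl

/-- cyclically reduced word -/
def CyclRed (L : List (α × Bool)) : Prop :=
  Red' L ∧ ∀ p q, L.head? = some p → L.getLast? = some q → RR q p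

lemma mk_step {L₁ L₂ : List (α × Bool)} (h : Red.Step L₁ L₂) : mk L₁ = mk L₂ := by
  rw [← quot_mk_eq_mk, ← quot_mk_eq_mk]; exact Quot.sound h

lemma mk_cons_cancel (r : α × Bool) (L : List (α × Bool)) :
    mk (r :: (r.1, !r.2) :: L) = mk L :=
  mk_step (Red.Step.cons_not)

lemma mk_cons_cancel' (r : α × Bool) (L : List (α × Bool)) :
    mk ((r.1, !r.2) :: r :: L) = mk L := by
  have := mk_cons_cancel (r.1, !r.2) L
  simpa using this

lemma invRev_cons (q : α × Bool) (L : List (α × Bool)) :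
    invRev (q :: L) = invRev L ++ [(q.1, !q.2)] := by
  simp [invRev]

lemma mk_pair_cancel (p : α × Bool) : mk [p, (p.1, !p.2)] = (1 : FreeGroup α) := by
  rw [one_eq_mk]; exact mk_cons_cancel p []

lemma single_mul_single (p : α × Bool) :
    mk [p] * mk [(p.1, !p.2)] = (1 : FreeGroup α) := by
  rw [mul_mk]; exact mk_pair_cancel p

lemma mk_cons (x : α × Bool) (L : List (α × Bool)) : mk (x :: L) = mk [x] * mk L := by
  rw [mul_mk]; rfl

lemma mk_concat (L : List (α × Bool)) (x : α × Bool) :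
    mk (L ++ [x]) = mk L * mk [x] := by
  rw [mul_mk]

/-- `z` has reduced form `g · w · g⁻¹` with `w` cyclically reduced of length `n`. -/
def Nice (z : FreeGroup α) (n : ℕ) : Prop :=
  ∃ g w, CyclRed w ∧ w.length = n ∧ z.toWord = g ++ w ++ invRev g

lemma nice_step (p : α × Bool) {z : FreeGroup α} {n : ℕ} (h : Nice z n) :
    Nice (mk [p] * z * (mk [p])⁻¹) n := by
  classical
  obtain ⟨g, w, hw, hlen, hz⟩ := h
  have hred : Red' (g ++ w ++ invRev g) := hz ▸ red'_toWord z
  have hzeq : z = mk (g ++ w ++ invRev g) := by rw [← hz, mk_toWord]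
  have hpinv : (mk [p] : FreeGroup α)⁻¹ = mk [(p.1, !p.2)] := by
    rw [inv_mk]; simp [invRev]
  rcases wcase : w with _ | ⟨a, t⟩
  · -- w = [] : z = 1
    subst wcase
    have hz1 : z = 1 := by
      rw [hzeq]
      have : g ++ ([] : List (α × Bool)) ++ invRev g = g ++ invRev g := by simp
      rw [this, ← mul_mk, ← inv_mk, mul_inv_cancel]
    refine ⟨[], [], ⟨List.isChain_nil, by simp⟩, hlen, ?_⟩
    rw [hz1, mul_one, mul_inv_cancel]
    simp [toWord_one]
  · -- w = a :: t
    subst wcase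
    have hwne : (a :: t : List (α × Bool)) ≠ [] := List.cons_ne_nil a t
    set b := (a :: t).getLast hwne with hbdef
    have hblast : (a :: t).getLast? = some b := List.getLast?_eq_getLast hwne
    have hwrap : RR b a := hw.2 a b rfl hblast
    rcases g with _ | ⟨q, g₁⟩
    · -- g = []
      have hredw : Red' (a :: t) := hw.1
      have hzw : z = mk (a :: t) := by
        rw [hzeq]; simp [invRev]
      by_cases hc1 : a = (p.1, !p.2)
      · -- left cancellation
        have halg : mk [p] * z * (mk [p])⁻¹ = mk (t ++ [a]) := by
          rw [hzw, hpinv, mk_cons a t, hc1]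
          calc mk [p] * (mk [(p.1, !p.2)] * mk t) * mk [(p.1, !p.2)]
              = (mk [p] * mk [(p.1, !p.2)]) * (mk t * mk [(p.1, !p.2)]) := by group
            _ = mk t * mk [(p.1, !p.2)] := by rw [single_mul_single, one_mul]
            _ = mk (t ++ [(p.1, !p.2)]) := mul_mk
        have hred' : Red' (t ++ [a]) := by
          apply List.isChain_append.2
          refine ⟨(List.isChain_cons.1 hredw).2, List.isChain_singleton a, ?_⟩
          intro x hx y hy
          simp only [List.head?_cons, Option.mem_def, Option.some.injEq] at hy
          subst hy
          have htne : t ≠ [] := by rintro rfl; simp at hx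
          have : (a :: t).getLast? = t.getLast? := by
            rcases t with _ | ⟨a2, t2⟩
            · exact absurd rfl htne
            · simp
          rw [this] at hblast
          rw [Option.mem_def, hblast] at hx
          injection hx with hx2
          rw [← hx2]; exact hwrap
        have hcyc : CyclRed (t ++ [a]) := by
          refine ⟨hred', ?_⟩
          intro p' q' hp' hq'
          rw [List.getLast?_concat] at hq'
          injection hq' with hq2
          subst hq2
          rcases t with _ | ⟨a2, t2⟩
          · have : p' = a := by simpa using hp'.symm
            subst this
            exact RR_self _
          · have : p' = a2 := by simpa using hp'.symm
            subst this
            exact (List.isChain_cons_cons.1 hredw).1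
        exact ⟨[], t ++ [a], hcyc, by simpa using hlen, by
          rw [halg, toWord_mk_eq hred']; simp [invRev]⟩
      · by_cases hc2 : b = p
        · -- right cancellation
          obtain ⟨t', hsplit⟩ : ∃ t', t' ++ [b] = a :: t :=
            ⟨(a :: t).dropLast, List.dropLast_append_getLast hwne⟩
          have halg : mk [p] * z * (mk [p])⁻¹ = mk (p :: t') := by
            have h2 : z = mk t' * mk [p] := by
              rw [hzw, ← hsplit, hc2, mk_concat]
            rw [h2, hpinv]
            calc mk [p] * (mk t' * mk [p]) * mk [(p.1, !p.2)]
                = mk [p] * mk t' * (mk [p] * mk [(p.1, !p.2)]) := by group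
              _ = mk [p] * mk t' := by rw [single_mul_single, mul_one]
              _ = mk (p :: t') := by rw [← mk_cons]
          have hsplit' : Red' (t' ++ [b]) := hsplit ▸ hredw
          have hparts := List.isChain_append.1 hsplit'
          have hredt' : List.Chain' RR t' := hparts.1
          have hjunc : ∀ x ∈ t'.getLast?, RR x p := by
            intro x hx
            have := hparts.2.2 x hx b (by simp)
            rwa [hc2] at this
          have hheadt' : t' ≠ [] → t'.head? = some a := by
            intro hne
            have : (t' ++ [b]).head? = t'.head? := List.head?_append_of_ne_nil _ hne
            rw [hsplit] at this
            simp at this; exact this.symm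
          have hred' : Red' (p :: t') := by
            apply List.isChain_cons.2
            refine ⟨?_, hredt'⟩
            intro y hy
            have htne : t' ≠ [] := by rintro rfl; simp at hy
            rw [Option.mem_def, hheadt' htne] at hy
            injection hy with h4
            subst h4
            have := hwrap; rwa [hc2] at this
          have hcyc : CyclRed (p :: t') := by
            refine ⟨hred', ?_⟩
            intro p' q' hp' hq'
            have hp2 : p' = p := by simpa using hp'.symm
            rw [hp2]
            rcases List.eq_nil_or_concat t' with rfl | ⟨t2, c, rfl⟩
            · have : q' = p := by simpa using hq'.symm
              rw [this]
              exact RR_self _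
            · have hq2 : q' = c := by
                have h5 : (p :: t2.concat c).getLast? = some c := by
                  rw [List.concat_eq_append, ← List.cons_append]
                  exact List.getLast?_concat
                rw [h5] at hq'
                simpa using hq'.symm
              rw [hq2]
              exact hjunc _ (by
                rw [Option.mem_def, List.concat_eq_append]
                exact List.getLast?_concat)
          refine ⟨[], p :: t', hcyc, ?_, ?_⟩
          · have h3 : t'.length + 1 = t.length + 1 := by
              have := congrArg List.length hsplit
              simpa using this
            simp only [List.length_cons, h3]
            simpa using hlen
          · rw [halg, toWord_mk_eq hred']; simp [invRev]
        · -- no cancellation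
          have hred' : Red' (p :: ((a :: t) ++ [(p.1, !p.2)])) := by
            apply List.isChain_cons.2
            constructor
            · intro y hy
              simp only [List.cons_append, List.head?_cons, Option.mem_def,
                Option.some.injEq] at hy
              subst hy
              rw [RR_iff]; exact hc1
            · apply List.isChain_append.2
              refine ⟨hredw, List.isChain_singleton _, ?_⟩
              intro x hx y hy
              simp only [List.head?_cons, Option.mem_def, Option.some.injEq] at hy
              subst hy
              have hxb : x = b := by
                rw [Option.mem_def, hblast] at hx
                injection hx with h6
                exact h6.symm
              rw [hxb]
              rw [RR_inv_right]; exact hc2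
          have halg : mk [p] * z * (mk [p])⁻¹ = mk (p :: ((a :: t) ++ [(p.1, !p.2)])) := by
            rw [hzw, hpinv, mul_mk, mul_mk]
            exact congrArg mk (by simp)
          refine ⟨[p], a :: t, hw, hlen, ?_⟩
          rw [halg, toWord_mk_eq hred']
          simp [invRev]
    · -- g = q :: g₁
      have higinv : invRev (q :: g₁) = invRev g₁ ++ [(q.1, !q.2)] := invRev_cons q g₁
      have hzalg : z = mk (q :: g₁) * mk (a :: t) * (mk (q :: g₁))⁻¹ := by
        rw [hzeq, inv_mk, mul_mk, mul_mk]
      by_cases hpq : p = (q.1, !q.2)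
      · -- p cancels q
        have hA : mk [p] * mk (q :: g₁) = mk g₁ := by
          rw [mul_mk]
          have : ([p] ++ q :: g₁ : List (α × Bool)) = p :: q :: g₁ := rfl
          rw [this, hpq]
          exact mk_cons_cancel' q g₁
        have halg : mk [p] * z * (mk [p])⁻¹ = mk g₁ * mk (a :: t) * (mk g₁)⁻¹ := by
          rw [hzalg]
          have : (mk [p] : FreeGroup α) * (mk (q :: g₁) * mk (a :: t) * (mk (q :: g₁))⁻¹) *
              (mk [p])⁻¹ = (mk [p] * mk (q :: g₁)) * mk (a :: t) *
              (mk [p] * mk (q :: g₁))⁻¹ := by group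
          rw [this, hA]
        have hinfix : (g₁ ++ (a :: t) ++ invRev g₁) <:+: (q :: g₁) ++ (a :: t) ++ invRev (q :: g₁) := by
          refine ⟨[q], [(q.1, !q.2)], ?_⟩
          rw [higinv]
          simp [List.append_assoc]
        have hred' : Red' (g₁ ++ (a :: t) ++ invRev g₁) := hred.infix hinfix
        refine ⟨g₁, a :: t, hw, hlen, ?_⟩
        rw [halg]
        rw [show (mk g₁ * mk (a :: t) * (mk g₁)⁻¹ : FreeGroup α) =
          mk (g₁ ++ (a :: t) ++ invRev g₁) by rw [inv_mk, mul_mk, mul_mk]]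
        exact toWord_mk_eq hred'
      · -- no cancellation with q
        have hlast : ((q :: g₁) ++ (a :: t) ++ invRev (q :: g₁)).getLast? = some (q.1, !q.2) := by
          rw [higinv, ← List.append_assoc]
          exact List.getLast?_concat
        have hred' : Red' (p :: ((q :: g₁) ++ (a :: t) ++ invRev (q :: g₁)) ++ [(p.1, !p.2)]) := by
          apply List.isChain_append.2
          refine ⟨?_, List.isChain_singleton _, ?_⟩
          · apply List.isChain_cons.2
            refine ⟨?_, hred⟩
            intro y hy
            simp only [List.cons_append, List.head?_cons, Option.mem_def, Option.some.injEq] at hy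
            subst hy
            rw [RR_comm, RR_iff]; exact hpq
          · intro x hx y hy
            simp only [List.head?_cons, Option.mem_def, Option.some.injEq] at hy
            subst hy
            have : (p :: ((q :: g₁) ++ (a :: t) ++ invRev (q :: g₁))).getLast? =
                ((q :: g₁) ++ (a :: t) ++ invRev (q :: g₁)).getLast? := by
              simp
            rw [Option.mem_def, this, hlast] at hx
            have hx2 : x = (q.1, !q.2) := by
              injection hx with h7
              exact h7.symm
            rw [hx2]
            rw [RR_inv_inv]; exact hpq
        have halg : mk [p] * z * (mk [p])⁻¹ =
            mk (p :: ((q :: g₁) ++ (a :: t) ++ invRev (q :: g₁)) ++ [(p.1, !p.2)]) := by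
          rw [hzeq, hpinv, mul_mk, mul_mk]
          exact congrArg mk (by simp)
        refine ⟨p :: q :: g₁, a :: t, hw, hlen, ?_⟩
        rw [halg, toWord_mk_eq hred', invRev_cons p (q :: g₁), higinv]
        simp [List.append_assoc]

lemma nice_conj (c : List (α × Bool)) {v : FreeGroup α} {n : ℕ} (h : Nice v n) :
    Nice (mk c * v * (mk c)⁻¹) n := by
  induction c with
  | nil =>
    have h1 : (mk [] : FreeGroup α) = 1 := (one_eq_mk).symm
    simpa [h1] using h
  | cons p c ih =>
    have h2 : (mk (p :: c) : FreeGroup α) * v * (mk (p :: c))⁻¹ =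
        mk [p] * (mk c * v * (mk c)⁻¹) * (mk [p])⁻¹ := by
      rw [mk_cons]; group
    rw [h2]
    exact nice_step p ih

lemma nice_self {x : FreeGroup α} (h : CyclRed x.toWord) : Nice x x.toWord.length :=
  ⟨[], x.toWord, h, rfl, by simp [invRev]⟩

lemma nice_of_isConj {v y : FreeGroup α} (h : CyclRed v.toWord) (hc : IsConj v y) :
    Nice y v.toWord.length := by
  obtain ⟨c, hc⟩ := isConj_iff.1 hc
  have := nice_conj c.toWord (nice_self h)
  rwa [mk_toWord, hc] at this

lemma norm_le_of_isConj {v y : FreeGroup α} (h : CyclRed v.toWord) (hc : IsConj v y) :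
    v.toWord.length ≤ y.toWord.length := by
  obtain ⟨g, w, hw, hlen, hy⟩ := nice_of_isConj h hc
  rw [hy]
  simp only [List.length_append, invRev_length]
  omega

/-- cyclic reduction: every element is conjugate to a cyclically reduced one -/
lemma exists_cyclRed_conj_aux :
    ∀ (N : ℕ) (x : FreeGroup α), x.toWord.length ≤ N →
      ∃ c v : FreeGroup α, CyclRed v.toWord ∧ x = c * v * c⁻¹ := by
  intro N
  induction N with
  | zero =>
    intro x hx
    refine ⟨1, x, ?_, by group⟩
    have h0 : x.toWord = [] := List.length_eq_zero_iff.1 (Nat.le_zero.1 hx)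
    rw [h0]
    exact ⟨List.isChain_nil, by intro p q hp hq; simp at hp⟩
  | succ N ih =>
    intro x hx
    by_cases hcr : CyclRed x.toWord
    · exact ⟨1, x, hcr, by group⟩
    · have hred : Red' x.toWord := red'_toWord x
      rw [CyclRed, not_and] at hcr
      push_neg at hcr
      obtain ⟨p, q, hp, hq, hnr⟩ := hcr hred
      rw [RR] at hnr
      push_neg at hnr
      have hq2 : q = (p.1, !p.2) := Prod.ext hnr.1 hnr.2
      obtain ⟨t, ht⟩ : ∃ t, x.toWord = p :: t := by
        cases hL : x.toWord with
        | nil => rw [hL] at hp; simp at hp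
        | cons u t =>
          rw [hL] at hp
          simp only [List.head?_cons, Option.some.injEq] at hp
          exact ⟨t, by rw [hp]⟩
      have htne : t ≠ [] := by
        rintro rfl
        rw [ht] at hq
        simp only [List.getLast?_singleton, Option.some.injEq] at hq
        rw [← hq] at hq2
        rcases p with ⟨y, c⟩
        simp at hq2
      have hqt : q ∈ t.getLast? := by
        rw [ht] at hq
        rcases t with _ | ⟨u, t2⟩
        · exact absurd rfl htne
        · rw [Option.mem_def, ← hq]
          simp
      have hsp : t.dropLast ++ [q] = t := List.dropLast_append_getLast? q hqt
      have hx2 : x.toWord = p :: (t.dropLast ++ [q]) := by rw [ht, hsp]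
      have hredt : Red' t.dropLast := by
        refine hred.infix ?_
        refine ⟨[p], [q], ?_⟩
        rw [hx2]; simp
      have hvw : (mk t.dropLast : FreeGroup α).toWord = t.dropLast := toWord_mk_eq hredt
      have hlen2 : (mk t.dropLast : FreeGroup α).toWord.length ≤ N := by
        rw [hvw]
        have h6 : t.length + 1 ≤ N + 1 := by
          rw [← List.length_cons (a := p) (as := t), ← ht]; exact hx
        have h7 : t.dropLast.length + 1 = t.length := by
          conv_rhs => rw [← hsp]
          simp
        omega
      obtain ⟨c', v', hv', he'⟩ := ih (mk t.dropLast) hlen2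
      refine ⟨mk [p] * c', v', hv', ?_⟩
      have hxeq : x = mk [p] * mk t.dropLast * (mk [p])⁻¹ := by
        conv_lhs => rw [← mk_toWord (x := x), hx2, mk_cons]
        rw [show (mk (t.dropLast ++ [q]) : FreeGroup α) = mk t.dropLast * mk [q] from mk_concat _ _]
        have hqinv : (mk [q] : FreeGroup α) = (mk [p])⁻¹ := by
          rw [inv_mk, hq2]
          exact congrArg mk (by simp [invRev])
        rw [hqinv]
        group
      rw [hxeq, he']
      group

lemma exists_cyclRed_conj (x : FreeGroup α) :
    ∃ c v : FreeGroup α, CyclRed v.toWord ∧ x = c * v * c⁻¹ :=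
  exists_cyclRed_conj_aux x.toWord.length x le_rfl

lemma conj_pow_eq (c v : FreeGroup α) (m : ℕ) :
    (c * v * c⁻¹) ^ m = c * v ^ m * c⁻¹ := by
  induction m with
  | zero => group
  | succ m ih => rw [pow_succ, pow_succ, ih]; group

/-- powers of cyclically reduced elements -/
lemma cyclRed_pow {x : FreeGroup α} (h : CyclRed x.toWord) (m : ℕ) :
    CyclRed ((x ^ m).toWord) ∧ (x ^ m).toWord.length = m * x.toWord.length := by
  rcases Nat.eq_zero_or_pos m with rfl | hm
  · constructor
    · rw [pow_zero, toWord_one]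
      exact ⟨List.isChain_nil, by intro p q hp hq; simp at hp⟩
    · simp
  -- m ≥ 1
  rcases hL : x.toWord with _ | ⟨a, t⟩
  · -- x = 1
    have : x = 1 := toWord_eq_nil_iff.1 hL
    subst this
    rw [one_pow]
    constructor
    · rw [toWord_one]
      exact ⟨List.isChain_nil, by intro p q hp hq; simp at hp⟩
    · simp
  · -- the word of x^m is the m-fold concatenation
    have hxmk : x = mk (a :: t) := by rw [← mk_toWord (x := x), hL]
    have hw : CyclRed (a :: t) := hL ▸ h
    obtain ⟨m, rfl⟩ : ∃ m', m = m' + 1 := ⟨m - 1, by omega⟩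
    have main : ∀ m : ℕ, Red' ((List.replicate (m+1) (a :: t)).flatten) ∧
        ((List.replicate (m+1) (a :: t)).flatten).head? = some a ∧
        ((List.replicate (m+1) (a :: t)).flatten).getLast? = (a :: t).getLast? ∧
        ((List.replicate (m+1) (a :: t)).flatten).length = (m+1) * (a :: t).length := by
      intro m
      induction m with
      | zero =>
        have h1 : (List.replicate 1 (a :: t)).flatten = a :: t := by simp
        rw [h1]
        exact ⟨hw.1, rfl, rfl, by simp⟩
      | succ m ih =>
        obtain ⟨ihred, ihhead, ihlast, ihlen⟩ := ih
        have hsucc : (List.replicate (m+1+1) (a :: t)).flatten =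
            (a :: t) ++ (List.replicate (m+1) (a :: t)).flatten := by
          rw [List.replicate_succ, List.flatten_cons]
        rw [hsucc]
        refine ⟨?_, ?_, ?_, ?_⟩
        · apply List.isChain_append.2
          refine ⟨hw.1, ihred, ?_⟩
          intro xx hxx y hy
          rw [Option.mem_def, ihhead] at hy
          have hy2 : y = a := by injection hy with h8; exact h8.symm
          rw [hy2]
          exact hw.2 a xx rfl (Option.mem_def.1 hxx)
        · simp
        · rw [List.getLast?_append, ihlast, Option.or_self]
        · rw [List.length_append, ihlen]; ring
    have hxm : x ^ (m+1) = mk ((List.replicate (m+1) (a :: t)).flatten) := by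
      rw [hxmk, pow_mk]
    obtain ⟨hredF, hheadF, hlastF, hlenF⟩ := main m
    have htw : (x ^ (m+1)).toWord = (List.replicate (m+1) (a :: t)).flatten := by
      rw [hxm]; exact toWord_mk_eq hredF
    constructor
    · rw [htw]
      refine ⟨hredF, ?_⟩
      intro p q hp hq
      rw [hheadF] at hp
      have hp2 : p = a := by injection hp with h9; exact h9.symm
      rw [hp2]
      rw [hlastF] at hq
      exact hw.2 a q rfl hq
    · rw [htw, hlenF, ← hL]
end Stmt11Aux




/-- The cyclically reduced word length of `x`: the minimal word length in the
conjugacy class of `x` (with respect to the standard basis of the free group). -/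
noncomputable def cyclLength {α : Type*} [DecidableEq α] (x : FreeGroup α) : ℕ :=
  sInf ((fun y : FreeGroup α => y.toWord.length) '' {y | IsConj x y})

/-- The sequence `a` is bounded above by a polynomial of degree `d`. -/
def PolyBounded (a : ℕ → ℕ) (d : ℕ) : Prop :=
  ∃ C : ℝ, ∀ k : ℕ, (a k : ℝ) ≤ C * (k + 1 : ℝ) ^ d

/-- The conjugacy class of `x` grows polynomially of degree exactly `d` under
iteration of the automorphism `Φ`. -/
def GrowsPolyDeg {α : Type*} [DecidableEq α] (Φ : MulAut (FreeGroup α))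
    (x : FreeGroup α) (d : ℕ) : Prop :=
  PolyBounded (fun k => cyclLength ((Φ ^ k) x)) d ∧
  ∀ d' < d, ¬ PolyBounded (fun k => cyclLength ((Φ ^ k) x)) d'

/-- The conjugacy class of `x` grows exponentially under iteration of `Φ`. -/
def GrowsExp {α : Type*} [DecidableEq α] (Φ : MulAut (FreeGroup α))
    (x : FreeGroup α) : Prop :=
  1 < Filter.liminf
    (fun k : ℕ => (cyclLength ((Φ ^ k) x) : ℝ) ^ ((1 : ℝ) / (k : ℝ))) Filter.atTop

/-- The cyclically reduced length of `x` relative to conjugation by elements of the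
subgroup `H` only: the minimal word length in the `H`-conjugacy class of `x`. -/
noncomputable def cyclLengthIn {α : Type*} [DecidableEq α]
    (H : Subgroup (FreeGroup α)) (x : FreeGroup α) : ℕ :=
  sInf ((fun y : FreeGroup α => y.toWord.length) '' {y | ∃ h ∈ H, h * x * h⁻¹ = y})

/-- The `H`-conjugacy class of `x` grows polynomially of degree exactly `d` under
iteration of `Ψ` (where `Ψ` preserves `H`). -/
def GrowsPolyDegIn {α : Type*} [DecidableEq α] (H : Subgroup (FreeGroup α))
    (Ψ : MulAut (FreeGroup α)) (x : FreeGroup α) (d : ℕ) : Prop :=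
  PolyBounded (fun k => cyclLengthIn H ((Ψ ^ k) x)) d ∧
  ∀ d' < d, ¬ PolyBounded (fun k => cyclLengthIn H ((Ψ ^ k) x)) d'




section Stmt11Layer2

open Stmt11Aux FreeGroup

variable {α : Type*} [DecidableEq α]

lemma cyclLength_le_len (x : FreeGroup α) : cyclLength x ≤ x.toWord.length :=
  Nat.sInf_le ⟨x, IsConj.refl x, rfl⟩

lemma cyclLength_eq_of_cyclRed {v : FreeGroup α} (h : CyclRed v.toWord) :
    cyclLength v = v.toWord.length := by
  refine le_antisymm (cyclLength_le_len v) ?_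
  refine le_csInf ⟨v.toWord.length, v, IsConj.refl v, rfl⟩ ?_
  rintro n ⟨y, hy, rfl⟩
  exact norm_le_of_isConj h hy

lemma cyclLength_conj {x y : FreeGroup α} (h : IsConj x y) :
    cyclLength x = cyclLength y := by
  have hset : {z | IsConj x z} = {z | IsConj y z} := by
    ext z
    exact ⟨fun hz => h.symm.trans hz, fun hz => h.trans hz⟩
  rw [cyclLength, cyclLength, hset]

lemma cyclLength_pow (x : FreeGroup α) (m : ℕ) :
    cyclLength (x ^ m) = m * cyclLength x := by
  obtain ⟨c, v, hv, rfl⟩ := exists_cyclRed_conj x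
  have h1 : IsConj v (c * v * c⁻¹) := isConj_iff.2 ⟨c, rfl⟩
  have h3 : IsConj (v ^ m) ((c * v * c⁻¹) ^ m) := by
    rw [conj_pow_eq]; exact isConj_iff.2 ⟨c, rfl⟩
  rw [← cyclLength_conj h3, ← cyclLength_conj h1]
  obtain ⟨hcr, hlen⟩ := cyclRed_pow hv m
  rw [cyclLength_eq_of_cyclRed hcr, hlen, cyclLength_eq_of_cyclRed hv]

lemma cyclLength_le_cyclLengthIn (H : Subgroup (FreeGroup α)) (x : FreeGroup α) :
    cyclLength x ≤ cyclLengthIn H x := by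
  have hne : ((fun y : FreeGroup α => y.toWord.length) ''
      {y | ∃ h ∈ H, h * x * h⁻¹ = y}).Nonempty :=
    ⟨x.toWord.length, x, ⟨1, H.one_mem, by group⟩, rfl⟩
  have hmem := Nat.sInf_mem hne
  obtain ⟨y, ⟨h, hH, hc⟩, hlen⟩ := hmem
  calc cyclLength x ≤ y.toWord.length := Nat.sInf_le ⟨y, isConj_iff.2 ⟨h, hc⟩, rfl⟩
    _ = cyclLengthIn H x := hlen

end Stmt11Layer2

/-- Let `F' ≤ F` be a finite index subgroup of the finitely generated free
group `F` with `Φᵏ(F') = F'` (`k ≥ 1`), and let `Ψ = Φᵏ` restricted to `F'`.  If `Ψ` is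
polynomially growing on `F'` (every `F'`-conjugacy class of an element of `F'` grows
polynomially under `Ψ`-iteration), then `Φᵏ` is polynomially growing on `F`: every
`x ∈ F` has a positive power `xᵐ ∈ F'`, and polynomial growth of degree `d` of the
`F'`-class of `xᵐ` under `Ψ` implies polynomial growth of degree `d` of the `F`-class of
`x` under `Φᵏ`. -/
theorem stmt11 {α : Type*} [DecidableEq α] [Finite α]
    (F' : Subgroup (FreeGroup α)) (hF' : F'.FiniteIndex)
    (Φ : MulAut (FreeGroup α)) (k : ℕ) (hk : 1 ≤ k)
    (hfix : F'.map (Φ ^ k : MulAut (FreeGroup α)).toMonoidHom = F')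
    (hΨ : ∀ x ∈ F', ∃ d : ℕ,
      PolyBounded (fun j => cyclLengthIn F' (((Φ ^ k) ^ j) x)) d) :
    (∀ x : FreeGroup α, ∃ d : ℕ,
      PolyBounded (fun j => cyclLength (((Φ ^ k) ^ j) x)) d) ∧
    ∀ x : FreeGroup α, ∃ m : ℕ, 1 ≤ m ∧ x ^ m ∈ F' ∧
      ∀ d : ℕ, GrowsPolyDegIn F' (Φ ^ k) (x ^ m) d → GrowsPolyDeg (Φ ^ k) x d := by
  classical
  have hidx : F'.index ≠ 0 := hF'.index_ne_zero
  -- coset representative bound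
  haveI : Fintype (FreeGroup α ⧸ F') := Subgroup.fintypeOfIndexNeZero hidx
  set C₀ : ℕ := Finset.univ.sup
    (fun q : FreeGroup α ⧸ F' => (Quotient.out q).toWord.length) with hC₀
  -- key upper bound for the subgroup-relative cyclic length
  have key : ∀ w : FreeGroup α, cyclLengthIn F' w ≤ cyclLength w + 2 * C₀ := by
    intro w
    have hne : ((fun y : FreeGroup α => y.toWord.length) '' {y | IsConj w y}).Nonempty :=
      ⟨w.toWord.length, w, IsConj.refl w, rfl⟩
    obtain ⟨z, hz, hzlen⟩ := Nat.sInf_mem hne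
    obtain ⟨c, hc⟩ := isConj_iff.1 hz
    set r : FreeGroup α := Quotient.out ((c : FreeGroup α) : FreeGroup α ⧸ F') with hr
    have hrc : ((r : FreeGroup α) : FreeGroup α ⧸ F') = ((c : FreeGroup α) : FreeGroup α ⧸ F') :=
      Quotient.out_eq _
    have hmem : r⁻¹ * c ∈ F' := (QuotientGroup.eq.1 hrc)
    have hconj : (r⁻¹ * c) * w * (r⁻¹ * c)⁻¹ = r⁻¹ * z * r := by
      rw [← hc]; group
    have hin : cyclLengthIn F' w ≤ (r⁻¹ * z * r).toWord.length :=
      Nat.sInf_le ⟨r⁻¹ * z * r, ⟨r⁻¹ * c, hmem, hconj⟩, rfl⟩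
    have hnorm : (r⁻¹ * z * r).toWord.length ≤ z.toWord.length + 2 * r.toWord.length := by
      have h1 := FreeGroup.norm_mul_le (r⁻¹ * z) r
      have h2 := FreeGroup.norm_mul_le r⁻¹ z
      have h3 : FreeGroup.norm r⁻¹ = FreeGroup.norm r := FreeGroup.norm_inv_eq
      simp only [Stmt11Aux.norm_eq_len] at h1 h2 h3
      omega
    have hrbound : r.toWord.length ≤ C₀ := by
      have hs : (fun q : FreeGroup α ⧸ F' => (Quotient.out q).toWord.length)
          ((c : FreeGroup α) : FreeGroup α ⧸ F') ≤ Finset.univ.sup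
          (fun q : FreeGroup α ⧸ F' => (Quotient.out q).toWord.length) :=
        Finset.le_sup (f := fun q : FreeGroup α ⧸ F' => (Quotient.out q).toWord.length)
          (Finset.mem_univ _)
      rw [hC₀]
      simpa [← hr] using hs
    have hzc : z.toWord.length = cyclLength w := hzlen
    omega
  -- power into the subgroup
  have powmem : ∀ x : FreeGroup α, ∃ m : ℕ, 1 ≤ m ∧ x ^ m ∈ F' := by
    intro x
    obtain ⟨m, hm0, _, hmem⟩ := Subgroup.exists_pow_mem_of_index_ne_zero hidx x
    exact ⟨m, hm0, hmem⟩
  -- the master chain of inequalities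
  have chain : ∀ (x : FreeGroup α) (m j : ℕ), 1 ≤ m →
      (cyclLength (((Φ ^ k) ^ j) x) ≤ cyclLengthIn F' (((Φ ^ k) ^ j) (x ^ m)) ∧
       cyclLengthIn F' (((Φ ^ k) ^ j) (x ^ m)) ≤ m * cyclLength (((Φ ^ k) ^ j) x) + 2 * C₀) := by
    intro x m j hm
    have hmap : ((Φ ^ k) ^ j) (x ^ m) = (((Φ ^ k) ^ j) x) ^ m := map_pow _ x m
    have hpow : cyclLength (((Φ ^ k) ^ j) (x ^ m)) = m * cyclLength (((Φ ^ k) ^ j) x) := by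
      rw [hmap, cyclLength_pow]
    constructor
    · calc cyclLength (((Φ ^ k) ^ j) x) ≤ m * cyclLength (((Φ ^ k) ^ j) x) :=
          Nat.le_mul_of_pos_left _ hm
        _ = cyclLength (((Φ ^ k) ^ j) (x ^ m)) := hpow.symm
        _ ≤ cyclLengthIn F' (((Φ ^ k) ^ j) (x ^ m)) := cyclLength_le_cyclLengthIn F' _
    · calc cyclLengthIn F' (((Φ ^ k) ^ j) (x ^ m)) ≤
          cyclLength (((Φ ^ k) ^ j) (x ^ m)) + 2 * C₀ := key _
        _ = m * cyclLength (((Φ ^ k) ^ j) x) + 2 * C₀ := by rw [hpow]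
  constructor
  · -- polynomial growth of every conjugacy class
    intro x
    obtain ⟨m, hm, hmem⟩ := powmem x
    obtain ⟨d, hpb⟩ := hΨ (x ^ m) hmem
    unfold PolyBounded at hpb
    obtain ⟨C, hC⟩ := hpb
    refine ⟨d, C, fun j => ?_⟩
    have h1 := (chain x m j hm).1
    calc (cyclLength (((Φ ^ k) ^ j) x) : ℝ) ≤
        (cyclLengthIn F' (((Φ ^ k) ^ j) (x ^ m)) : ℝ) := Nat.cast_le.2 h1
      _ ≤ C * (j + 1 : ℝ) ^ d := hC j
  · -- degrees agree
    intro x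
    obtain ⟨m, hm, hmem⟩ := powmem x
    refine ⟨m, hm, hmem, ?_⟩
    intro d hGd
    unfold GrowsPolyDegIn at hGd
    obtain ⟨hub, hlb⟩ := hGd
    unfold GrowsPolyDeg
    unfold PolyBounded at hub ⊢
    constructor
    · obtain ⟨C, hC⟩ := hub
      refine ⟨C, fun j => ?_⟩
      have h1 := (chain x m j hm).1
      calc (cyclLength (((Φ ^ k) ^ j) x) : ℝ) ≤
          (cyclLengthIn F' (((Φ ^ k) ^ j) (x ^ m)) : ℝ) := Nat.cast_le.2 h1
        _ ≤ C * (j + 1 : ℝ) ^ d := hC j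
    · intro d' hd' hpb'
      obtain ⟨C', hC'⟩ := hpb'
      refine hlb d' hd' ⟨m * C' + 2 * C₀, fun j => ?_⟩
      have h2 := (chain x m j hm).2
      have hx0 : (0 : ℝ) ≤ (j + 1 : ℝ) ^ d' := by positivity
      have hx1 : (1 : ℝ) ≤ (j + 1 : ℝ) ^ d' := by
        apply one_le_pow₀
        have : (0 : ℝ) ≤ (j : ℝ) := Nat.cast_nonneg j
        linarith
      have hCj := hC' j
      calc (cyclLengthIn F' (((Φ ^ k) ^ j) (x ^ m)) : ℝ) ≤
          (m : ℝ) * (cyclLength (((Φ ^ k) ^ j) x) : ℝ) + 2 * (C₀ : ℝ) := by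
            have := Nat.cast_le (α := ℝ).2 h2
            push_cast at this ⊢
            linarith
        _ ≤ (m : ℝ) * (C' * (j + 1 : ℝ) ^ d') + 2 * (C₀ : ℝ) := by
            have hm0 : (0 : ℝ) ≤ (m : ℝ) := Nat.cast_nonneg m
            nlinarith [hCj]
        _ ≤ ((m : ℝ) * C' + 2 * (C₀ : ℝ)) * (j + 1 : ℝ) ^ d' := by
            have hc0 : (0 : ℝ) ≤ (C₀ : ℝ) := Nat.cast_nonneg C₀
            nlinarith
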